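/- Let B₁ and B₂ be Banach spaces and let f : B₁ → B₂ be twice continuously Fréchet differentiable with ‖f′(x)‖ ≤ M₁ and ‖f″(x)‖ ≤ M₂ for all x ∈ B₁. Let β ∈ (0,1] and let x₁, x₂ : [a,b] → B₁ be β-Hölder continuous. Then for all a ≤ s < r ≤ b, ‖f(x₂(r)) − f(x₁(r)) − f(x₂(s)) + f(x₁(s))‖ ≤ M₁ ‖x₂ − x₁‖_{s,r,β} (r−s)^β + M₂ (‖x₁‖_{s,r,β} + ‖x₂‖_{s,r,β}) ‖x₂ − x₁‖_{s,r} (r−s)^β. -/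

import Mathlib

open Set MeasureTheory Filter

noncomputable def supNorm {B : Type*} [NormedAddCommGroup B] (x : ℝ → B) (a b : ℝ) : ℝ :=
  ⨆ t : Icc a b, ‖x t‖

noncomputable def holderNorm {B : Type*} [NormedAddCommGroup B] (x : ℝ → B) (a b β : ℝ) : ℝ :=
  ⨆ q : {q : ℝ × ℝ // a ≤ q.1 ∧ q.1 < q.2 ∧ q.2 ≤ b},
    ‖x q.1.2 - x q.1.1‖ / (q.1.2 - q.1.1) ^ β

def HolderOn {B : Type*} [NormedAddCommGroup B] (f : ℝ → B) (a b lam : ℝ) : Prop :=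
  ∃ C : ℝ, ∀ s ∈ Icc a b, ∀ t ∈ Icc a b, ‖f t - f s‖ ≤ C * |t - s| ^ lam

section Aux

variable {B : Type*} [NormedAddCommGroup B]

lemma holderNorm_bdd {x : ℝ → B} {a b s r β C : ℝ}
    (hC : ∀ s' ∈ Icc a b, ∀ t ∈ Icc a b, ‖x t - x s'‖ ≤ C * |t - s'| ^ β)
    (has : a ≤ s) (hrb : r ≤ b) :
    BddAbove (Set.range fun q : {q : ℝ × ℝ // s ≤ q.1 ∧ q.1 < q.2 ∧ q.2 ≤ r} =>
      ‖x q.1.2 - x q.1.1‖ / (q.1.2 - q.1.1) ^ β) := by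
  refine ⟨C, ?_⟩
  rintro _ ⟨⟨⟨u, v⟩, hu, huv, hv⟩, rfl⟩
  have hpos : (0 : ℝ) < (v - u) ^ β := Real.rpow_pos_of_pos (by linarith) β
  rw [div_le_iff₀ hpos]
  have := hC u ⟨by linarith, by linarith⟩ v ⟨by linarith, by linarith⟩
  rwa [abs_of_pos (by linarith : (0 : ℝ) < v - u)] at this

lemma le_holderNorm {x : ℝ → B} {a b s r β C : ℝ}
    (hC : ∀ s' ∈ Icc a b, ∀ t ∈ Icc a b, ‖x t - x s'‖ ≤ C * |t - s'| ^ β)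
    (has : a ≤ s) (hrb : r ≤ b) {u v : ℝ} (hu : s ≤ u) (huv : u < v) (hv : v ≤ r) :
    ‖x v - x u‖ ≤ holderNorm x s r β * (v - u) ^ β := by
  have hpos : (0 : ℝ) < (v - u) ^ β := Real.rpow_pos_of_pos (by linarith) β
  rw [← div_le_iff₀ hpos]
  exact le_ciSup (holderNorm_bdd hC has hrb) ⟨(u, v), hu, huv, hv⟩

lemma holderNorm_nonneg' {x : ℝ → B} {s r β : ℝ} : 0 ≤ holderNorm x s r β :=
  Real.iSup_nonneg fun q =>
    div_nonneg (norm_nonneg _) (Real.rpow_nonneg (by linarith [q.2.2.1]) β)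

lemma supNorm_nonneg' {x : ℝ → B} {s r : ℝ} : 0 ≤ supNorm x s r :=
  Real.iSup_nonneg fun t => norm_nonneg _

lemma le_supNorm {x : ℝ → B} {a b s r β C : ℝ} (hβ : 0 < β)
    (hC : ∀ s' ∈ Icc a b, ∀ t ∈ Icc a b, ‖x t - x s'‖ ≤ C * |t - s'| ^ β)
    (has : a ≤ s) (hrb : r ≤ b) {t : ℝ} (ht : t ∈ Icc s r) :
    ‖x t‖ ≤ supNorm x s r := by
  have hbdd : BddAbove (Set.range fun t : Icc s r => ‖x t‖) := by
    refine ⟨‖x s‖ + |C| * (b - a) ^ β, ?_⟩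
    rintro _ ⟨⟨u, hu⟩, rfl⟩
    have h1 : ‖x u - x s‖ ≤ C * |u - s| ^ β :=
      hC s ⟨has, by linarith [ht.1, ht.2]⟩ u ⟨by linarith [hu.1], by linarith [hu.2]⟩
    have h2 : |u - s| ^ β ≤ (b - a) ^ β := by
      apply Real.rpow_le_rpow (abs_nonneg _) _ hβ.le
      rw [abs_of_nonneg (by linarith [hu.1] : (0 : ℝ) ≤ u - s)]
      linarith [hu.2]
    have h3 : (0 : ℝ) ≤ |u - s| ^ β := Real.rpow_nonneg (abs_nonneg _) β
    have h4 : C * |u - s| ^ β ≤ |C| * (b - a) ^ β := by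
      calc C * |u - s| ^ β ≤ |C| * |u - s| ^ β :=
            mul_le_mul_of_nonneg_right (le_abs_self C) h3
        _ ≤ |C| * (b - a) ^ β := mul_le_mul_of_nonneg_left h2 (abs_nonneg C)
    have h5 : ‖x u‖ ≤ ‖x s‖ + ‖x u - x s‖ := by
      have := norm_add_le (x s) (x u - x s)
      simpa using this
    linarith
  exact le_ciSup hbdd ⟨t, ht⟩

end Aux

theorem four_point_holder_estimate_C2
    {B₁ B₂ : Type*} [NormedAddCommGroup B₁] [NormedSpace ℝ B₁]
    [NormedAddCommGroup B₂] [NormedSpace ℝ B₂]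
    (f : B₁ → B₂) (hf : ContDiff ℝ 2 f)
    (M₁ M₂ : ℝ)
    (hM₁ : ∀ x : B₁, ‖fderiv ℝ f x‖ ≤ M₁)
    (hM₂ : ∀ x : B₁, ‖fderiv ℝ (fderiv ℝ f) x‖ ≤ M₂)
    (β a b : ℝ) (hβ0 : 0 < β) (hβ1 : β ≤ 1) (hab : a < b)
    (x₁ x₂ : ℝ → B₁) (hx₁ : HolderOn x₁ a b β) (hx₂ : HolderOn x₂ a b β) :
    ∀ s r : ℝ, a ≤ s → s < r → r ≤ b →
      ‖f (x₂ r) - f (x₁ r) - f (x₂ s) + f (x₁ s)‖ ≤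
        M₁ * holderNorm (fun t => x₂ t - x₁ t) s r β * (r - s) ^ β +
          M₂ * (holderNorm x₁ s r β + holderNorm x₂ s r β) *
            supNorm (fun t => x₂ t - x₁ t) s r * (r - s) ^ β := by
  obtain ⟨C₁, hC₁⟩ := hx₁
  obtain ⟨C₂, hC₂⟩ := hx₂
  have hCd : ∀ s' ∈ Icc a b, ∀ t ∈ Icc a b,
      ‖(x₂ t - x₁ t) - (x₂ s' - x₁ s')‖ ≤ (C₁ + C₂) * |t - s'| ^ β := by
    intro s' hs' t ht
    have h1 := hC₁ s' hs' t ht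
    have h2 := hC₂ s' hs' t ht
    have heq : (x₂ t - x₁ t) - (x₂ s' - x₁ s') = (x₂ t - x₂ s') - (x₁ t - x₁ s') := by abel
    rw [heq]
    calc ‖(x₂ t - x₂ s') - (x₁ t - x₁ s')‖ ≤ ‖x₂ t - x₂ s'‖ + ‖x₁ t - x₁ s'‖ :=
          norm_sub_le _ _
      _ ≤ (C₁ + C₂) * |t - s'| ^ β := by rw [add_mul]; linarith
  intro s r has hsr hrb
  have hM₁0 : 0 ≤ M₁ := le_trans (norm_nonneg _) (hM₁ 0)
  have hM₂0 : 0 ≤ M₂ := le_trans (ContinuousLinearMap.opNorm_nonneg _) (hM₂ 0)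
  have hdiff : ∀ y : B₁, DifferentiableAt ℝ f y :=
    fun y => (hf.differentiable (by norm_num)).differentiableAt
  have hf' : ContDiff ℝ 1 (fderiv ℝ f) := hf.fderiv_right (by norm_num)
  have hlip : ∀ u v : B₁, ‖fderiv ℝ f v - fderiv ℝ f u‖ ≤ M₂ * ‖v - u‖ := fun u v =>
    Convex.norm_image_sub_le_of_norm_fderiv_le
      (fun y _ => (hf'.differentiable one_ne_zero).differentiableAt)
      (fun y _ => hM₂ y) convex_univ (mem_univ u) (mem_univ v)
  set pr : ℝ → B₁ := fun t => x₁ r + t • (x₂ r - x₁ r) with hpr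
  set ps : ℝ → B₁ := fun t => x₁ s + t • (x₂ s - x₁ s) with hps
  set g : ℝ → B₂ := fun t => f (pr t) - f (ps t) with hgdef
  set g' : ℝ → B₂ := fun t =>
    fderiv ℝ f (pr t) (x₂ r - x₁ r) - fderiv ℝ f (ps t) (x₂ s - x₁ s) with hg'def
  have hg : ∀ t : ℝ, HasDerivAt g (g' t) t := by
    intro t
    have h1 : HasDerivAt pr (x₂ r - x₁ r) t := by
      have := ((hasDerivAt_id t).smul_const (x₂ r - x₁ r)).const_add (x₁ r)
      simp only [one_smul] at this
      exact this
    have h2 : HasDerivAt ps (x₂ s - x₁ s) t := by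
      have := ((hasDerivAt_id t).smul_const (x₂ s - x₁ s)).const_add (x₁ s)
      simp only [one_smul] at this
      exact this
    exact ((hdiff (pr t)).hasFDerivAt.comp_hasDerivAt t h1).sub
      ((hdiff (ps t)).hasFDerivAt.comp_hasDerivAt t h2)
  set K : ℝ := M₁ * ‖(x₂ r - x₁ r) - (x₂ s - x₁ s)‖ +
    M₂ * (‖x₁ r - x₁ s‖ + ‖x₂ r - x₂ s‖) * ‖x₂ s - x₁ s‖ with hKdef
  have hbound : ∀ t ∈ Ico (0 : ℝ) 1, ‖g' t‖ ≤ K := by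
    intro t ht
    have key : g' t = fderiv ℝ f (pr t) ((x₂ r - x₁ r) - (x₂ s - x₁ s)) +
        (fderiv ℝ f (pr t) - fderiv ℝ f (ps t)) (x₂ s - x₁ s) := by
      simp only [hg'def, map_sub, ContinuousLinearMap.sub_apply]
      abel
    have hdist : pr t - ps t = (1 - t) • (x₁ r - x₁ s) + t • (x₂ r - x₂ s) := by
      simp only [hpr, hps, smul_sub, sub_smul, one_smul]
      abel
    have hdistle : ‖pr t - ps t‖ ≤ ‖x₁ r - x₁ s‖ + ‖x₂ r - x₂ s‖ := by
      rw [hdist]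
      have := norm_add_le ((1 - t) • (x₁ r - x₁ s)) (t • (x₂ r - x₂ s))
      rw [norm_smul, norm_smul, Real.norm_eq_abs, Real.norm_eq_abs,
        abs_of_nonneg (by linarith [ht.2] : (0 : ℝ) ≤ 1 - t),
        abs_of_nonneg ht.1] at this
      nlinarith [norm_nonneg (x₁ r - x₁ s), norm_nonneg (x₂ r - x₂ s), ht.1, ht.2]
    have hA : ‖fderiv ℝ f (pr t) ((x₂ r - x₁ r) - (x₂ s - x₁ s))‖ ≤
        M₁ * ‖(x₂ r - x₁ r) - (x₂ s - x₁ s)‖ := by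
      calc ‖fderiv ℝ f (pr t) ((x₂ r - x₁ r) - (x₂ s - x₁ s))‖ ≤
            ‖fderiv ℝ f (pr t)‖ * ‖(x₂ r - x₁ r) - (x₂ s - x₁ s)‖ :=
            ContinuousLinearMap.le_opNorm _ _
        _ ≤ M₁ * ‖(x₂ r - x₁ r) - (x₂ s - x₁ s)‖ :=
            mul_le_mul_of_nonneg_right (hM₁ _) (norm_nonneg _)
    have hB : ‖(fderiv ℝ f (pr t) - fderiv ℝ f (ps t)) (x₂ s - x₁ s)‖ ≤
        M₂ * (‖x₁ r - x₁ s‖ + ‖x₂ r - x₂ s‖) * ‖x₂ s - x₁ s‖ := by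
      calc ‖(fderiv ℝ f (pr t) - fderiv ℝ f (ps t)) (x₂ s - x₁ s)‖ ≤
            ‖fderiv ℝ f (pr t) - fderiv ℝ f (ps t)‖ * ‖x₂ s - x₁ s‖ :=
            ContinuousLinearMap.le_opNorm _ _
        _ ≤ (M₂ * ‖pr t - ps t‖) * ‖x₂ s - x₁ s‖ :=
            mul_le_mul_of_nonneg_right (hlip (ps t) (pr t)) (norm_nonneg _)
        _ ≤ M₂ * (‖x₁ r - x₁ s‖ + ‖x₂ r - x₂ s‖) * ‖x₂ s - x₁ s‖ := by
            apply mul_le_mul_of_nonneg_right _ (norm_nonneg _)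
            exact mul_le_mul_of_nonneg_left hdistle hM₂0
    calc ‖g' t‖ ≤ ‖fderiv ℝ f (pr t) ((x₂ r - x₁ r) - (x₂ s - x₁ s))‖ +
          ‖(fderiv ℝ f (pr t) - fderiv ℝ f (ps t)) (x₂ s - x₁ s)‖ := by
          rw [key]; exact norm_add_le _ _
      _ ≤ K := by rw [hKdef]; linarith
  have hmv : ‖g 1 - g 0‖ ≤ K :=
    norm_image_sub_le_of_norm_deriv_le_segment_01'
      (fun t _ => (hg t).hasDerivWithinAt) hbound
  have hgeq : f (x₂ r) - f (x₁ r) - f (x₂ s) + f (x₁ s) = g 1 - g 0 := by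
    simp only [hgdef, hpr, hps, one_smul, zero_smul, add_zero, add_sub_cancel]
    abel
  -- Hölder/sup bounds
  set p : ℝ := (r - s) ^ β with hp
  have hppos : (0 : ℝ) < p := Real.rpow_pos_of_pos (by linarith) β
  set H := holderNorm (fun t => x₂ t - x₁ t) s r β with hH
  set H₁ := holderNorm x₁ s r β with hH₁
  set H₂ := holderNorm x₂ s r β with hH₂
  set S := supNorm (fun t => x₂ t - x₁ t) s r with hS
  have e1 : ‖(x₂ r - x₁ r) - (x₂ s - x₁ s)‖ ≤ H * p :=
    le_holderNorm hCd has hrb le_rfl hsr le_rfl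
  have e2 : ‖x₁ r - x₁ s‖ ≤ H₁ * p := le_holderNorm hC₁ has hrb le_rfl hsr le_rfl
  have e3 : ‖x₂ r - x₂ s‖ ≤ H₂ * p := le_holderNorm hC₂ has hrb le_rfl hsr le_rfl
  have e4 : ‖x₂ s - x₁ s‖ ≤ S :=
    le_supNorm hβ0 hCd has hrb ⟨le_rfl, hsr.le⟩
  have hH₁0 : 0 ≤ H₁ := holderNorm_nonneg'
  have hH₂0 : 0 ≤ H₂ := holderNorm_nonneg'
  have hS0 : 0 ≤ S := supNorm_nonneg'
  have t1 : M₁ * ‖(x₂ r - x₁ r) - (x₂ s - x₁ s)‖ ≤ M₁ * (H * p) :=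
    mul_le_mul_of_nonneg_left e1 hM₁0
  have t2 : M₂ * (‖x₁ r - x₁ s‖ + ‖x₂ r - x₂ s‖) * ‖x₂ s - x₁ s‖ ≤
      M₂ * ((H₁ + H₂) * p) * S := by
    have hsum : ‖x₁ r - x₁ s‖ + ‖x₂ r - x₂ s‖ ≤ (H₁ + H₂) * p := by
      rw [add_mul]; linarith
    have hsum0 : 0 ≤ (H₁ + H₂) * p := mul_nonneg (by linarith) hppos.le
    have step1 : M₂ * (‖x₁ r - x₁ s‖ + ‖x₂ r - x₂ s‖) ≤ M₂ * ((H₁ + H₂) * p) :=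
      mul_le_mul_of_nonneg_left hsum hM₂0
    calc M₂ * (‖x₁ r - x₁ s‖ + ‖x₂ r - x₂ s‖) * ‖x₂ s - x₁ s‖ ≤
          M₂ * ((H₁ + H₂) * p) * ‖x₂ s - x₁ s‖ :=
          mul_le_mul_of_nonneg_right step1 (norm_nonneg _)
      _ ≤ M₂ * ((H₁ + H₂) * p) * S :=
          mul_le_mul_of_nonneg_left e4 (mul_nonneg hM₂0 hsum0)
  calc ‖f (x₂ r) - f (x₁ r) - f (x₂ s) + f (x₁ s)‖ = ‖g 1 - g 0‖ := by rw [hgeq]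
    _ ≤ K := hmv
    _ ≤ M₁ * (H * p) + M₂ * ((H₁ + H₂) * p) * S := by rw [hKdef]; linarith
    _ = M₁ * H * p + M₂ * (H₁ + H₂) * S * p := by ring
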